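/- For ν ≥ 0 and r > 0, the function σ ↦ σ · I_ν'(r/√σ) / I_ν(r/√σ) is strictly monotone (injective) on (0, ∞). In particular, if σ₁, σ₂ > 0 satisfy σ₁ I_ν'(r/√σ₁)/I_ν(r/√σ₁) = σ₂ I_ν'(r/√σ₂)/I_ν(r/√σ₂), then σ₁ = σ₂. -/

import Mathlib

/-- Modified Bessel function of the first kind of order ν. -/
noncomputable def besselI (ν : ℝ) (x : ℝ) : ℝ :=
  ∑' k : ℕ, (x / 2) ^ (ν + 2 * (k : ℝ)) / ((Nat.factorial k : ℝ) * Real.Gamma (ν + (k : ℝ) + 1))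

namespace BesselAux
open Real

noncomputable def term (ν x : ℝ) (k : ℕ) : ℝ :=
  (x / 2) ^ (ν + 2 * (k : ℝ)) / ((Nat.factorial k : ℝ) * Real.Gamma (ν + (k : ℝ) + 1))

lemma besselI_eq_tsum (ν x : ℝ) : besselI ν x = ∑' k, term ν x k := rfl

lemma gamma_arg_pos {ν : ℝ} (hν : 0 ≤ ν) (k : ℕ) : 0 < ν + (k : ℝ) + 1 := by positivity

lemma gamma_pos {ν : ℝ} (hν : 0 ≤ ν) (k : ℕ) : 0 < Real.Gamma (ν + (k : ℝ) + 1) :=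
  Real.Gamma_pos_of_pos (gamma_arg_pos hν k)

lemma gamma_lb {ν : ℝ} (hν : 0 ≤ ν) :
    ∀ k : ℕ, (k.factorial : ℝ) * Real.Gamma (ν + 1) ≤ Real.Gamma (ν + (k : ℝ) + 1) := by
  intro k
  induction k with
  | zero => simp
  | succ n ih =>
    have h1 : ν + ((n + 1 : ℕ) : ℝ) + 1 = (ν + (n : ℝ) + 1) + 1 := by push_cast; ring
    rw [h1, Real.Gamma_add_one (ne_of_gt (gamma_arg_pos hν n))]
    have h2 : ((n + 1 : ℕ).factorial : ℝ) = ((n : ℝ) + 1) * n.factorial := by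
      rw [Nat.factorial_succ]; push_cast; ring
    rw [h2]
    have hg0 : 0 < Real.Gamma (ν + (n : ℝ) + 1) := gamma_pos hν n
    calc ((n : ℝ) + 1) * n.factorial * Real.Gamma (ν + 1)
        = ((n : ℝ) + 1) * (n.factorial * Real.Gamma (ν + 1)) := by ring
      _ ≤ ((n : ℝ) + 1) * Real.Gamma (ν + (n : ℝ) + 1) := by
          apply mul_le_mul_of_nonneg_left ih (by positivity)
      _ ≤ (ν + (n : ℝ) + 1) * Real.Gamma (ν + (n : ℝ) + 1) := by
          apply mul_le_mul_of_nonneg_right (by linarith) hg0.le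

lemma term_eq {ν x : ℝ} (hx : 0 < x) (k : ℕ) :
    term ν x k = (x / 2) ^ ν * (x ^ 2 / 4) ^ k / ((k.factorial : ℝ) * Real.Gamma (ν + (k : ℝ) + 1)) := by
  have h2 : (0 : ℝ) < x / 2 := by linarith
  have : (x / 2) ^ (ν + 2 * (k : ℝ)) = (x / 2) ^ ν * (x ^ 2 / 4) ^ k := by
    rw [Real.rpow_add h2]
    congr 1
    rw [show (2 * (k : ℝ)) = ((2 * k : ℕ) : ℝ) by push_cast; ring, Real.rpow_natCast, pow_mul]
    congr 1
    ring
  rw [term, this]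

lemma term_pos {ν x : ℝ} (hν : 0 ≤ ν) (hx : 0 < x) (k : ℕ) : 0 < term ν x k := by
  have h2 : (0 : ℝ) < x / 2 := by linarith
  have := gamma_pos hν k
  have h3 : (0:ℝ) < (x / 2) ^ (ν + 2 * (k : ℝ)) := Real.rpow_pos_of_pos h2 _
  have h4 : (0:ℝ) < (k.factorial : ℝ) := by exact_mod_cast k.factorial_pos
  exact div_pos h3 (by positivity)

lemma growth (ν : ℝ) (hν : 0 ≤ ν) : ∀ k : ℕ, ν + 2 * (k:ℝ) ≤ (ν + 2) * 2 ^ k := by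
  intro k
  induction k with
  | zero => simp
  | succ n ih =>
    have h2 : (2:ℝ) ≤ (ν + 2) * 2 ^ n := by
      calc (2:ℝ) = 2 * 1 := by ring
      _ ≤ (ν + 2) * 2 ^ n := by
        apply mul_le_mul (by linarith) (one_le_pow₀ (by norm_num)) one_pos.le (by linarith)
    push_cast
    calc ν + 2 * ((n:ℝ) + 1) = (ν + 2 * n) + 2 := by ring
      _ ≤ (ν + 2) * 2 ^ n + (ν+2) * 2^n := by linarith
      _ = (ν + 2) * 2 ^ (n+1) := by ring

lemma summable_weighted {ν : ℝ} (hν : 0 ≤ ν) {c : ℝ} (hc : 0 ≤ c) :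
    Summable (fun k : ℕ => (ν + 2 * (k:ℝ)) * c ^ k / ((k.factorial : ℝ) * Real.Gamma (ν + (k : ℝ) + 1))) := by
  have hG1 : 0 < Real.Gamma (ν + 1) := Real.Gamma_pos_of_pos (by linarith)
  refine Summable.of_nonneg_of_le ?_ ?_
    (((Real.summable_pow_div_factorial (2*c)).mul_left ((ν + 2) / Real.Gamma (ν + 1))))
  · intro k
    have h1 : (0:ℝ) < (k.factorial : ℝ) := by exact_mod_cast k.factorial_pos
    have := gamma_pos hν k
    positivity
  · intro k
    have h1 : (0:ℝ) < (k.factorial : ℝ) := by exact_mod_cast k.factorial_pos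
    have hg := gamma_pos hν k
    have hlb := gamma_lb hν k
    have hgrow := growth ν hν k
    have hnum : (ν + 2 * (k:ℝ)) * c ^ k ≤ (ν + 2) * (2*c) ^ k := by
      rw [mul_pow]
      calc (ν + 2 * (k:ℝ)) * c ^ k ≤ ((ν + 2) * 2 ^ k) * c ^ k :=
            mul_le_mul_of_nonneg_right hgrow (by positivity)
        _ = (ν + 2) * (2 ^ k * c ^ k) := by ring
    have hfac1 : (1:ℝ) ≤ (k.factorial : ℝ) := by exact_mod_cast k.factorial_pos
    have hden : (k.factorial : ℝ) * Real.Gamma (ν + 1) ≤ (k.factorial : ℝ) * Real.Gamma (ν + (k:ℝ) + 1) :=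
      hlb.trans (le_mul_of_one_le_left hg.le hfac1)
    have key : (ν + 2 * (k:ℝ)) * c ^ k / ((k.factorial : ℝ) * Real.Gamma (ν + (k : ℝ) + 1))
        ≤ ((ν + 2) * (2*c) ^ k) / ((k.factorial : ℝ) * Real.Gamma (ν + 1)) :=
      div_le_div₀ (by positivity) hnum (by positivity) hden
    refine key.trans (le_of_eq ?_)
    rw [div_mul_div_comm, mul_comm (Real.Gamma (ν+1))]

lemma summable_plain {ν : ℝ} (hν : 0 ≤ ν) {c : ℝ} (hc : 0 ≤ c) :
    Summable (fun k : ℕ => c ^ k / ((k.factorial : ℝ) * Real.Gamma (ν + (k : ℝ) + 1))) := by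
  have hG1 : 0 < Real.Gamma (ν + 1) := Real.Gamma_pos_of_pos (by linarith)
  refine Summable.of_nonneg_of_le ?_ ?_
    (((Real.summable_pow_div_factorial c).mul_left (1 / Real.Gamma (ν + 1))))
  · intro k
    have h1 : (0:ℝ) < (k.factorial : ℝ) := by exact_mod_cast k.factorial_pos
    have := gamma_pos hν k
    positivity
  · intro k
    have h1 : (0:ℝ) < (k.factorial : ℝ) := by exact_mod_cast k.factorial_pos
    have hg := gamma_pos hν k
    have hfac1 : (1:ℝ) ≤ (k.factorial : ℝ) := by exact_mod_cast k.factorial_pos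
    have hden : (k.factorial : ℝ) * Real.Gamma (ν + 1) ≤ (k.factorial : ℝ) * Real.Gamma (ν + (k:ℝ) + 1) :=
      (gamma_lb hν k).trans (le_mul_of_one_le_left hg.le hfac1)
    have key : c ^ k / ((k.factorial : ℝ) * Real.Gamma (ν + (k : ℝ) + 1))
        ≤ c ^ k / ((k.factorial : ℝ) * Real.Gamma (ν + 1)) :=
      div_le_div₀ (by positivity) le_rfl (by positivity) hden
    refine key.trans (le_of_eq ?_)
    rw [div_mul_div_comm, mul_comm (Real.Gamma (ν+1)), one_mul]

lemma summable_term {ν x : ℝ} (hν : 0 ≤ ν) (hx : 0 < x) : Summable (term ν x) := by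
  have h := (summable_plain hν (c := x^2/4) (by positivity)).mul_left ((x/2) ^ ν)
  refine h.congr fun k => ?_
  rw [term_eq hx, mul_div_assoc]

lemma besselI_pos {ν x : ℝ} (hν : 0 ≤ ν) (hx : 0 < x) : 0 < besselI ν x := by
  rw [besselI_eq_tsum]
  exact Summable.tsum_pos (summable_term hν hx) (fun k => (term_pos hν hx k).le) 0 (term_pos hν hx 0)

lemma rpow_bound {a b y p : ℝ} (ha : 0 < a) (hay : a ≤ y) (hyb : y ≤ b) :
    y ^ p ≤ a ^ p + b ^ p := by
  rcases le_or_gt 0 p with hp | hp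
  · have h1 := Real.rpow_le_rpow (by linarith) hyb hp
    have h2 : 0 ≤ a ^ p := (Real.rpow_pos_of_pos ha p).le
    linarith
  · have h1 := Real.rpow_le_rpow_of_nonpos ha hay hp.le
    have h2 : 0 ≤ b ^ p := (Real.rpow_pos_of_pos (by linarith) p).le
    linarith

lemma rpow_split {a : ℝ} (ha : 0 < a) (μ : ℝ) (k : ℕ) :
    a ^ (μ + 2 * (k:ℝ)) = a ^ μ * (a ^ 2) ^ k := by
  rw [Real.rpow_add ha]
  congr 1
  rw [show (2 * (k : ℝ)) = ((2 * k : ℕ) : ℝ) by push_cast; ring, Real.rpow_natCast, pow_mul]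

lemma hasDerivAt_term (ν : ℝ) (k : ℕ) {y : ℝ} (hy : 0 < y) :
    HasDerivAt (fun z => term ν z k)
      (1 / 2 * (ν + 2 * (k:ℝ)) * (y / 2) ^ (ν + 2 * (k:ℝ) - 1) /
        ((k.factorial : ℝ) * Real.Gamma (ν + (k:ℝ) + 1))) y := by
  have h2 : y / 2 ≠ 0 := by positivity
  have h4 := (((hasDerivAt_id y).div_const 2).rpow_const
      (p := ν + 2 * (k:ℝ)) (Or.inl h2)).div_const ((k.factorial : ℝ) * Real.Gamma (ν + (k:ℝ) + 1))
  simpa [term, id] using h4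


lemma hasDerivAt_besselI_tsum {ν x : ℝ} (hν : 0 ≤ ν) (hx : 0 < x) :
    HasDerivAt (fun z => ∑' k, term ν z k)
      ((∑' k : ℕ, term (ν+1) x k) + ν / x * ∑' k, term ν x k) x := by
  have hx2 : (0:ℝ) < x / 2 := by linarith
  have hfac : ∀ k : ℕ, (0:ℝ) < (k.factorial : ℝ) := fun k => by exact_mod_cast k.factorial_pos
  have hcpos : ∀ k : ℕ, 0 < (k.factorial : ℝ) * Real.Gamma (ν + (k:ℝ) + 1) :=
    fun k => mul_pos (hfac k) (gamma_pos hν k)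
  set g' : ℕ → ℝ → ℝ := fun k y => 1 / 2 * (ν + 2 * (k:ℝ)) * (y / 2) ^ (ν + 2 * (k:ℝ) - 1) /
      ((k.factorial : ℝ) * Real.Gamma (ν + (k:ℝ) + 1)) with hg'def
  set u : ℕ → ℝ := fun k => 1 / 2 * (ν + 2 * (k:ℝ)) *
      ((x / 4) ^ (ν + 2 * (k:ℝ) - 1) + x ^ (ν + 2 * (k:ℝ) - 1)) /
      ((k.factorial : ℝ) * Real.Gamma (ν + (k:ℝ) + 1)) with hudef
  have hu : Summable u := by
    have h1 := (summable_weighted hν (c := (x/4)^2) (by positivity)).mul_left ((x/4) ^ (ν - 1) * (1/2))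
    have h2 := (summable_weighted hν (c := x^2) (by positivity)).mul_left (x ^ (ν - 1) * (1/2))
    refine (h1.add h2).congr fun k => ?_
    have e1 : (x/4) ^ (ν + 2*(k:ℝ) - 1) = (x/4) ^ (ν - 1) * ((x/4)^2) ^ k := by
      rw [show ν + 2*(k:ℝ) - 1 = (ν - 1) + 2*(k:ℝ) by ring, rpow_split (by positivity)]
    have e2 : x ^ (ν + 2*(k:ℝ) - 1) = x ^ (ν - 1) * (x^2) ^ k := by
      rw [show ν + 2*(k:ℝ) - 1 = (ν - 1) + 2*(k:ℝ) by ring, rpow_split hx]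
    simp only [hudef, e1, e2]
    ring
  have hmem : x ∈ Set.Ioo (x/2) (2*x) := ⟨by linarith, by linarith⟩
  have hderiv : ∀ (k : ℕ) (y : ℝ), y ∈ Set.Ioo (x/2) (2*x) → HasDerivAt (fun z => term ν z k) (g' k y) y :=
    fun k y hy => hasDerivAt_term ν k (lt_trans hx2 hy.1)
  have hbound : ∀ (k : ℕ) (y : ℝ), y ∈ Set.Ioo (x/2) (2*x) → ‖g' k y‖ ≤ u k := by
    intro k y hy
    have hy0 : 0 < y := lt_trans hx2 hy.1
    have hb : (y/2) ^ (ν + 2*(k:ℝ) - 1) ≤ (x/4) ^ (ν + 2*(k:ℝ) - 1) + x ^ (ν + 2*(k:ℝ) - 1) :=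
      rpow_bound (by positivity) (by linarith [hy.1]) (by linarith [hy.2])
    have hnn : 0 ≤ g' k y := by
      have := Real.rpow_pos_of_pos (show (0:ℝ) < y/2 by positivity) (ν + 2*(k:ℝ) - 1)
      have hk : (0:ℝ) ≤ ν + 2*(k:ℝ) := by positivity
      simp only [hg'def]
      positivity
    rw [Real.norm_eq_abs, abs_of_nonneg hnn]
    simp only [hg'def, hudef]
    apply div_le_div₀ ?_ ?_ (hcpos k) le_rfl
    · have hk : (0:ℝ) ≤ ν + 2*(k:ℝ) := by positivity
      have h4 : (0:ℝ) < x/4 := by linarith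
      have := (Real.rpow_pos_of_pos h4 (ν + 2*(k:ℝ) - 1)).le
      have := (Real.rpow_pos_of_pos hx (ν + 2*(k:ℝ) - 1)).le
      positivity
    · apply mul_le_mul_of_nonneg_left hb (by positivity)
  have hmain := hasDerivAt_tsum_of_isPreconnected hu isOpen_Ioo isPreconnected_Ioo
      hderiv hbound hmem (summable_term hν hx) hmem
  -- now rewrite the derivative value
  have hg'x : Summable (fun k => g' k x) :=
    Summable.of_norm_bounded hu (fun k => hbound k x hmem)
  set h : ℕ → ℝ := fun k => (k:ℝ) * (x / 2) ^ (ν + 2 * (k:ℝ) - 1) /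
      ((k.factorial : ℝ) * Real.Gamma (ν + (k:ℝ) + 1)) with hhdef
  have hident : ∀ k, g' k x = ν / x * term ν x k + h k := by
    intro k
    have e : (x/2) ^ (ν + 2*(k:ℝ)) = (x/2) ^ (ν + 2*(k:ℝ) - 1) * (x/2) := by
      nth_rewrite 1 [show ν + 2*(k:ℝ) = (ν + 2*(k:ℝ) - 1) + 1 from by ring]
      rw [Real.rpow_add_one (ne_of_gt hx2)]
    simp only [hg'def, hhdef, term]
    rw [e]
    field_simp
  have hh : Summable h := by
    refine (hg'x.sub (((summable_term hν hx)).mul_left (ν / x))).congr fun k => ?_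
    rw [hident k]; ring
  have hsum : (∑' k, g' k x) = (∑' k : ℕ, term (ν+1) x k) + ν / x * ∑' k, term ν x k := by
    calc (∑' k, g' k x) = ∑' k, (ν / x * term ν x k + h k) := tsum_congr hident
      _ = (∑' k, ν / x * term ν x k) + ∑' k, h k :=
          Summable.tsum_add ((summable_term hν hx).mul_left _) hh
      _ = ν / x * (∑' k, term ν x k) + ∑' k, h k := by rw [tsum_mul_left]
      _ = ν / x * (∑' k, term ν x k) + (∑' k : ℕ, term (ν+1) x k) := by
          congr 1
          rw [Summable.tsum_eq_zero_add hh]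
          have h0 : h 0 = 0 := by simp [hhdef]
          rw [h0, zero_add]
          refine tsum_congr fun k => ?_
      -- h (k+1) = term (ν+1) x k
          have e1 : ν + 2 * ((k+1 : ℕ) : ℝ) - 1 = (ν + 1) + 2 * (k:ℝ) := by push_cast; ring
          have e2 : ν + ((k+1 : ℕ) : ℝ) + 1 = (ν + 1) + (k:ℝ) + 1 := by push_cast; ring
          have e3 : (((k+1 : ℕ).factorial : ℝ)) = ((k:ℝ) + 1) * (k.factorial : ℝ) := by
            rw [Nat.factorial_succ]; push_cast; ring
          simp only [hhdef, term, e1, e2, e3]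
          have hg := gamma_pos (by linarith : (0:ℝ) ≤ ν + 1) k
          have : ((k+1:ℕ):ℝ) = (k:ℝ) + 1 := by push_cast; ring
          rw [this]
          rw [show (ν+1) + (k:ℝ) + 1 = ν + (k:ℝ) + 1 + 1 by ring] at hg ⊢
          field_simp
      _ = (∑' k : ℕ, term (ν+1) x k) + ν / x * (∑' k, term ν x k) := by ring
  rw [hsum] at hmain
  exact hmain



lemma hasDerivAt_besselI {ν x : ℝ} (hν : 0 ≤ ν) (hx : 0 < x) :
    HasDerivAt (besselI ν) (besselI (ν+1) x + ν / x * besselI ν x) x := by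
  have h := hasDerivAt_besselI_tsum hν hx
  exact h

lemma recurrence {ν x : ℝ} (hν : 0 ≤ ν) (hx : 0 < x) :
    besselI ν x = besselI (ν+2) x + (2*(ν+1)/x) * besselI (ν+1) x := by
  have hx2 : (0:ℝ) < x/2 := by linarith
  have hsν : Summable (term ν x) := summable_term hν hx
  have hs1 : Summable (term (ν+1) x) := summable_term (by linarith) hx
  have hs2 : Summable (term (ν+2) x) := summable_term (by linarith) hx
  have hshift1 : Summable (fun k => term (ν+1) x (k+1)) := (summable_nat_add_iff 1).2 hs1
  have key0 : term ν x 0 = (2*(ν+1)/x) * term (ν+1) x 0 := by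
    have hg : Real.Gamma (ν+1+1) = (ν+1)*Real.Gamma (ν+1) := Real.Gamma_add_one (by positivity)
    have he : (x/2)^(ν+1) = (x/2)^ν * (x/2) := Real.rpow_add_one (ne_of_gt hx2) ν
    have hgp : 0 < Real.Gamma (ν+1) := Real.Gamma_pos_of_pos (by positivity)
    simp only [term, Nat.cast_zero, mul_zero, add_zero, Nat.factorial_zero, Nat.cast_one, one_mul]
    rw [hg, he]
    field_simp
  have key : ∀ k : ℕ, term ν x (k+1) = term (ν+2) x k + (2*(ν+1)/x) * term (ν+1) x (k+1) := by
    intro k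
    have e1 : ν + 2*(((k+1):ℕ):ℝ) = (ν+2) + 2*(k:ℝ) := by push_cast; ring
    have e2 : ν + 1 + 2*(((k+1):ℕ):ℝ) = ((ν+2) + 2*(k:ℝ)) + 1 := by push_cast; ring
    have e3 : ν + (((k+1):ℕ):ℝ) + 1 = ν + (k:ℝ) + 2 := by push_cast; ring
    have e4 : ν + 1 + (((k+1):ℕ):ℝ) + 1 = (ν + (k:ℝ) + 2) + 1 := by push_cast; ring
    have e5 : ν + 2 + (k:ℝ) + 1 = (ν + (k:ℝ) + 2) + 1 := by ring
    have efac : (((k+1 : ℕ)).factorial : ℝ) = ((k:ℝ) + 1) * (k.factorial : ℝ) := by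
      rw [Nat.factorial_succ]; push_cast; ring
    have hgp : 0 < Real.Gamma (ν + (k:ℝ) + 2) := Real.Gamma_pos_of_pos (by positivity)
    have hg : Real.Gamma ((ν + (k:ℝ) + 2) + 1) = (ν + (k:ℝ) + 2) * Real.Gamma (ν + (k:ℝ) + 2) :=
      Real.Gamma_add_one (by positivity)
    have he : (x/2) ^ (((ν+2) + 2*(k:ℝ)) + 1) = (x/2) ^ ((ν+2) + 2*(k:ℝ)) * (x/2) :=
      Real.rpow_add_one (ne_of_gt hx2) _
    have hfp : (0:ℝ) < (k.factorial : ℝ) := by exact_mod_cast k.factorial_pos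
    simp only [term, e1, e2, e3, e4, e5, efac, hg, he]
    field_simp
    ring
  simp only [besselI_eq_tsum]
  rw [Summable.tsum_eq_zero_add hsν, Summable.tsum_eq_zero_add hs1]
  rw [tsum_congr key, Summable.tsum_add hs2 (hshift1.mul_left _), tsum_mul_left]
  rw [key0]
  ring


lemma B_lb {x : ℝ} (hx : 0 < x) : x / 2 ≤ besselI 1 x := by
  rw [besselI_eq_tsum]
  have h0 : term 1 x 0 = x / 2 := by
    simp only [term, Nat.cast_zero, mul_zero, add_zero, Nat.factorial_zero, Nat.cast_one, one_mul]
    rw [show (1:ℝ) + 1 = 2 by norm_num, Real.Gamma_two, Real.rpow_one, div_one]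
  calc x / 2 = term 1 x 0 := h0.symm
    _ ≤ ∑' k, term 1 x k :=
      Summable.le_tsum (summable_term one_pos.le hx) 0 (fun j _ => (term_pos one_pos.le hx j).le)

lemma A_ub {x : ℝ} (hx : 0 < x) (hx1 : x ≤ 1) : besselI 0 x ≤ 1 + x^2 / 3 := by
  have hsum : Summable (term 0 x) := summable_term le_rfl hx
  have h0 : term 0 x 0 = 1 := by
    simp only [term, Nat.cast_zero, mul_zero, add_zero, zero_add, Nat.factorial_zero,
      Nat.cast_one, one_mul, Real.rpow_zero, Real.Gamma_one, div_one]
  have hterm : ∀ k : ℕ, term 0 x (k+1) ≤ x^2/4 * (1/4 : ℝ)^k := by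
    intro k
    rw [term_eq hx]
    have hgam : Real.Gamma (0 + ((k+1:ℕ):ℝ) + 1) = ((k+1).factorial : ℝ) := by
      rw [show (0:ℝ) + ((k+1:ℕ):ℝ) + 1 = ((k+1:ℕ):ℝ) + 1 by ring, Real.Gamma_nat_eq_factorial]
    rw [hgam, Real.rpow_zero, one_mul]
    have hf1 : (1:ℝ) ≤ ((k+1).factorial : ℝ) := by exact_mod_cast (k+1).factorial_pos
    have hx24 : (0:ℝ) ≤ x^2/4 := by positivity
    have hx241 : x^2/4 ≤ 1/4 := by nlinarith
    calc (x^2/4)^(k+1) / (((k+1).factorial : ℝ) * ((k+1).factorial : ℝ))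
        ≤ (x^2/4)^(k+1) / 1 := by
          apply div_le_div₀ (by positivity) le_rfl one_pos
          nlinarith
      _ = (x^2/4) * (x^2/4)^k := by rw [div_one, pow_succ]; ring
      _ ≤ (x^2/4) * (1/4)^k := by
          apply mul_le_mul_of_nonneg_left (pow_le_pow_left₀ hx24 hx241 k) hx24
  have hshift : Summable (fun k => term 0 x (k+1)) := (summable_nat_add_iff 1).2 hsum
  have hgeo : Summable (fun k : ℕ => x^2/4 * (1/4:ℝ)^k) :=
    (summable_geometric_of_lt_one (by norm_num) (by norm_num)).mul_left _
  rw [besselI_eq_tsum]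
  calc (∑' k, term 0 x k) = term 0 x 0 + ∑' k, term 0 x (k+1) := Summable.tsum_eq_zero_add hsum
    _ ≤ 1 + ∑' k : ℕ, x^2/4 * (1/4:ℝ)^k := by
        rw [h0]
        exact add_le_add le_rfl (Summable.tsum_le_tsum hterm hshift hgeo)
    _ = 1 + x^2/4 * (1 - 1/4 : ℝ)⁻¹ := by rw [tsum_mul_left, tsum_geometric_of_lt_one (by norm_num) (by norm_num)]
    _ = 1 + x^2/3 := by norm_num; ring


end BesselAux

open BesselAux

set_option maxHeartbeats 1000000 in
theorem sigma_map_strictMono_and_injective (ν r : ℝ) (hν : 0 ≤ ν) (hr : 0 < r) :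
    StrictMonoOn
      (fun σ : ℝ => σ * deriv (besselI ν) (r / Real.sqrt σ) / besselI ν (r / Real.sqrt σ))
      (Set.Ioi 0)
    ∧ ∀ σ₁ σ₂ : ℝ, 0 < σ₁ → 0 < σ₂ →
        σ₁ * deriv (besselI ν) (r / Real.sqrt σ₁) / besselI ν (r / Real.sqrt σ₁) =
          σ₂ * deriv (besselI ν) (r / Real.sqrt σ₂) / besselI ν (r / Real.sqrt σ₂) →
        σ₁ = σ₂ := by
  set A : ℝ → ℝ := besselI ν with hAdef
  set B : ℝ → ℝ := besselI (ν+1) with hBdef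
  set q : ℝ → ℝ := fun t => t * B t / A t with hqdef
  set M : ℝ → ℝ := fun t => (q t)^2 + (2*ν+3) * q t + 3*ν - t^2 with hMdef
  have hA0 : ∀ t : ℝ, 0 < t → 0 < A t := fun t ht => besselI_pos hν ht
  have hB0 : ∀ t : ℝ, 0 < t → 0 < B t := fun t ht => besselI_pos (by linarith) ht
  have hq0 : ∀ t : ℝ, 0 < t → 0 < q t := fun t ht => by
    have := hA0 t ht; have := hB0 t ht
    simp only [hqdef]; positivity
  have hA : ∀ t : ℝ, 0 < t → HasDerivAt A (B t + ν/t * A t) t :=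
    fun t ht => hasDerivAt_besselI hν ht
  have hB : ∀ t : ℝ, 0 < t → HasDerivAt B (A t - (ν+1)/t * B t) t := by
    intro t ht
    have h := hasDerivAt_besselI (ν := ν+1) (by linarith) ht
    have hrec := recurrence hν ht
    have e2 : ν + 1 + 1 = ν + 2 := by ring
    rw [e2] at h
    convert h using 1
    rw [hBdef, hAdef]
    have : besselI (ν+2) t = besselI ν t - (2*(ν+1)/t) * besselI (ν+1) t := by linarith
    rw [this]; ring
  have hq : ∀ t : ℝ, 0 < t → HasDerivAt q (t - (q t)^2/t - 2*ν*(q t)/t) t := by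
    intro t ht
    have h1 := ((hasDerivAt_id t).mul (hB t ht)).div (hA t ht) (hA0 t ht).ne'
    convert h1 using 1
    · rfl
    · rfl
    · rfl
    simp only [hqdef, id_eq, Pi.mul_apply]
    have hAne := (hA0 t ht).ne'
    field_simp
    ring
  have hM : ∀ t : ℝ, 0 < t →
      HasDerivAt M ((2 * q t + (2*ν+3)) * (t - (q t)^2/t - 2*ν*(q t)/t) - 2*t) t := by
    intro t ht
    have h1 := (hq t ht).mul (hq t ht)
    have h2 := (hq t ht).const_mul (2*ν+3)
    have h3 : HasDerivAt (fun y : ℝ => y^2) (2*t) t := by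
      simpa using hasDerivAt_pow 2 t
    have h4 := ((h1.add h2).add_const (3*ν)).sub h3
    convert h4 using 1
    · rfl
    · rfl
    · funext y; simp only [hMdef, Pi.sub_apply, Pi.add_apply, Pi.mul_apply]; ring
    · ring
  -- small t positivity of M
  have hsmall : ∃ ε : ℝ, 0 < ε ∧ ∀ t : ℝ, 0 < t → t < ε → 0 < M t := by
    rcases eq_or_lt_of_le hν with hν0 | hν0
    · -- ν = 0
      refine ⟨1, one_pos, fun t ht ht1 => ?_⟩
      have hA1 : A t ≤ 1 + t^2/3 := by
        rw [hAdef, ← hν0]; exact A_ub ht ht1.le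
      have hB1 : t/2 ≤ B t := by
        rw [hBdef, ← hν0, zero_add]; exact B_lb ht
      have hApos := hA0 t ht
      have h43 : A t ≤ 4/3 := by nlinarith
      have hq_lb : 3*t^2/8 ≤ q t := by
        rw [hqdef, le_div_iff₀ hApos]
        nlinarith
      simp only [hMdef, ← hν0]
      nlinarith [hq0 t ht]
    · -- ν > 0
      refine ⟨Real.sqrt (3*ν), Real.sqrt_pos.2 (by linarith), fun t ht htε => ?_⟩
      have ht2 : t^2 < 3*ν := by
        nlinarith [Real.sq_sqrt (show (0:ℝ) ≤ 3*ν by linarith), Real.sqrt_nonneg (3*ν)]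
      have := hq0 t ht
      simp only [hMdef]
      nlinarith
  -- M positive everywhere
  have hMpos : ∀ t : ℝ, 0 < t → 0 < M t := by
    by_contra hcon
    push_neg at hcon
    obtain ⟨t₁, ht₁pos, ht₁⟩ := hcon
    obtain ⟨ε, hε, hsm⟩ := hsmall
    have hεt₁ : ε ≤ t₁ := by
      by_contra h
      push_neg at h
      exact absurd (hsm t₁ ht₁pos h) (not_lt.2 ht₁)
    set S : Set ℝ := {t : ℝ | t ∈ Set.Icc (ε/2) t₁ ∧ M t ≤ 0} with hSdef
    have hScontOn : ContinuousOn M (Set.Icc (ε/2) t₁) := fun t ht =>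
      (hM t (lt_of_lt_of_le (by linarith) ht.1)).continuousAt.continuousWithinAt
    have hSclosed : IsClosed S := by
      have hSeq : S = Set.Icc (ε/2) t₁ ∩ M ⁻¹' (Set.Iic 0) := rfl
      rw [hSeq]
      exact hScontOn.preimage_isClosed_of_isClosed isClosed_Icc isClosed_Iic
    have hSne : S.Nonempty := ⟨t₁, ⟨by linarith, le_rfl⟩, ht₁⟩
    have hSbdd : BddBelow S := ⟨ε/2, fun t htS => htS.1.1⟩
    set t₀ := sInf S with ht₀def
    have ht₀S : t₀ ∈ S := hSclosed.csInf_mem hSne hSbdd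
    have ht₀pos : 0 < t₀ := lt_of_lt_of_le (by linarith) ht₀S.1.1
    have hεt₀ : ε ≤ t₀ := by
      by_contra h
      push_neg at h
      exact absurd (hsm t₀ ht₀pos h) (not_lt.2 ht₀S.2)
    have hlt : ∀ t : ℝ, 0 < t → t < t₀ → 0 < M t := by
      intro t ht htlt
      rcases lt_or_ge t ε with h | h
      · exact hsm t ht h
      · by_contra hMt
        push_neg at hMt
        have htS : t ∈ S := ⟨⟨by linarith, by linarith [ht₀S.1.2]⟩, hMt⟩
        exact absurd (csInf_le hSbdd htS) (not_le.2 htlt)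
    have hM0 : M t₀ = 0 := by
      refine le_antisymm ht₀S.2 ?_
      have htend : Filter.Tendsto M (nhdsWithin t₀ (Set.Iio t₀)) (nhds (M t₀)) :=
        ((hM t₀ ht₀pos).continuousAt).continuousWithinAt.tendsto
      refine ge_of_tendsto htend ?_
      filter_upwards [Ioo_mem_nhdsLT (half_lt_self ht₀pos)]
        with t htIoo
      exact (hlt t (lt_trans (half_pos ht₀pos) htIoo.1) htIoo.2).le
    -- derivative positive at t₀
    have hq₀pos : 0 < q t₀ := hq0 t₀ ht₀pos
    have hM0' : (q t₀)^2 + (2*ν+3) * q t₀ + 3*ν - t₀^2 = 0 := hM0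
    have ht₀sq : t₀^2 = (q t₀)^2 + (2*ν+3) * q t₀ + 3*ν := by linarith
    have hqt' : (t₀ - (q t₀)^2/t₀ - 2*ν*(q t₀)/t₀) * t₀ = t₀^2 - (q t₀)^2 - 2*ν*(q t₀) := by
      field_simp
    have hDt : ((2 * q t₀ + (2*ν+3)) * (t₀ - (q t₀)^2/t₀ - 2*ν*(q t₀)/t₀) - 2*t₀) * t₀
        = 4*(q t₀)^2 + (8*ν+3)*(q t₀) + 6*ν^2 + 3*ν := by
      calc ((2 * q t₀ + (2*ν+3)) * (t₀ - (q t₀)^2/t₀ - 2*ν*(q t₀)/t₀) - 2*t₀) * t₀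
          = (2 * q t₀ + (2*ν+3)) * ((t₀ - (q t₀)^2/t₀ - 2*ν*(q t₀)/t₀) * t₀) - 2*t₀^2 := by
            ring
        _ = (2 * q t₀ + (2*ν+3)) * (t₀^2 - (q t₀)^2 - 2*ν*(q t₀)) - 2*t₀^2 := by rw [hqt']
        _ = 4*(q t₀)^2 + (8*ν+3)*(q t₀) + 6*ν^2 + 3*ν := by rw [ht₀sq]; ring
    have hDpos : 0 < (2 * q t₀ + (2*ν+3)) * (t₀ - (q t₀)^2/t₀ - 2*ν*(q t₀)/t₀) - 2*t₀ := by
      have h1 : 0 < ((2 * q t₀ + (2*ν+3)) * (t₀ - (q t₀)^2/t₀ - 2*ν*(q t₀)/t₀) - 2*t₀) * t₀ := by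
        rw [hDt]; nlinarith [sq_nonneg (q t₀), sq_nonneg ν]
      by_contra h
      push_neg at h
      nlinarith
    have hslope : Filter.Tendsto (slope M t₀) (nhdsWithin t₀ {t₀}ᶜ)
        (nhds ((2 * q t₀ + (2*ν+3)) * (t₀ - (q t₀)^2/t₀ - 2*ν*(q t₀)/t₀) - 2*t₀)) :=
      hasDerivAt_iff_tendsto_slope.1 (hM t₀ ht₀pos)
    have hev : slope M t₀ ⁻¹' Set.Ioi 0 ∈ nhdsWithin t₀ {t₀}ᶜ :=
      hslope (Ioi_mem_nhds hDpos)
    have hev2 : slope M t₀ ⁻¹' Set.Ioi 0 ∈ nhdsWithin t₀ (Set.Iio t₀) :=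
      nhdsWithin_mono t₀ (fun x hx => ne_of_lt hx) hev
    have hIoo : Set.Ioo (t₀/2) t₀ ∈ nhdsWithin t₀ (Set.Iio t₀) :=
      Ioo_mem_nhdsLT (half_lt_self ht₀pos)
    obtain ⟨t, htsl, htIoo⟩ := Filter.nonempty_of_mem (Filter.inter_mem hev2 hIoo)
    have htpos : 0 < t := lt_trans (half_pos ht₀pos) htIoo.1
    have hMt_pos : 0 < M t := hlt t htpos htIoo.2
    have hsl : 0 < (M t - M t₀) / (t - t₀) := by
      have h := htsl
      rwa [Set.mem_preimage, Set.mem_Ioi, slope_def_field] at h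
    rw [hM0, sub_zero] at hsl
    have hneg : M t < 0 := by
      rcases div_pos_iff.1 hsl with ⟨h1, h2⟩ | ⟨h1, h2⟩
      · linarith [htIoo.2, sub_pos.1 h2]
      · linarith
    linarith
  -- W strictly antitone on Ioi 0
  set W : ℝ → ℝ := fun t => r^2 * (ν + q t) / t^3 with hWdef
  have hW : ∀ t : ℝ, 0 < t → HasDerivAt W
      ((r^2 * (t - (q t)^2/t - 2*ν*(q t)/t) * t^3 - r^2 * (ν + q t) * (3*t^2)) / (t^3)^2) t := by
    intro t ht
    have h1 : HasDerivAt (fun y => r^2 * (ν + q y)) (r^2 * (t - (q t)^2/t - 2*ν*(q t)/t)) t :=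
      ((hq t ht).const_add ν).const_mul (r^2)
    have h2 : HasDerivAt (fun y : ℝ => y^3) (3*t^2) t := by simpa using hasDerivAt_pow 3 t
    exact h1.div h2 (by positivity)
  have hWderiv_neg : ∀ t : ℝ, 0 < t → deriv W t < 0 := by
    intro t ht
    rw [(hW t ht).deriv]
    have hMt := hMpos t ht
    have hnum : r^2 * (t - (q t)^2/t - 2*ν*(q t)/t) * t^3 - r^2 * (ν + q t) * (3*t^2)
        = -(r^2 * M t * t^2) := by
      simp only [hMdef]
      field_simp
      ring
    rw [hnum]
    apply div_neg_of_neg_of_pos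
    · have : 0 < r^2 * M t * t^2 := by positivity
      linarith
    · positivity
  have hWanti : StrictAntiOn W (Set.Ioi 0) := by
    apply strictAntiOn_of_deriv_neg (convex_Ioi 0)
    · exact fun t ht => (hW t ht).continuousAt.continuousWithinAt
    · intro t ht
      rw [interior_Ioi] at ht
      exact hWderiv_neg t ht
  -- the sigma map equals W ∘ (r / sqrt ·)
  have hGW : ∀ σ : ℝ, 0 < σ →
      σ * deriv A (r / Real.sqrt σ) / A (r / Real.sqrt σ) = W (r / Real.sqrt σ) := by
    intro σ hσ
    have hs : 0 < Real.sqrt σ := Real.sqrt_pos.2 hσ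
    have ht : 0 < r / Real.sqrt σ := div_pos hr hs
    set t := r / Real.sqrt σ with htdef
    have hσt : σ * t^2 = r^2 := by
      rw [htdef, div_pow, Real.sq_sqrt hσ.le]
      field_simp
    have hdA : deriv A t = B t + ν/t * A t := (hA t ht).deriv
    rw [hdA]
    simp only [hWdef, hqdef, ← hσt]
    have hAne := (hA0 t ht).ne'
    field_simp
    ring
  have hmono : StrictMonoOn
      (fun σ : ℝ => σ * deriv (besselI ν) (r / Real.sqrt σ) / besselI ν (r / Real.sqrt σ))
      (Set.Ioi 0) := by
    intro a ha b hb hab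
    have ha' : (0:ℝ) < a := ha
    have hb' : (0:ℝ) < b := hb
    simp only
    rw [hGW a ha', hGW b hb']
    have hta : 0 < r / Real.sqrt a := div_pos hr (Real.sqrt_pos.2 ha')
    have htb : 0 < r / Real.sqrt b := div_pos hr (Real.sqrt_pos.2 hb')
    have hsab : Real.sqrt a < Real.sqrt b := Real.sqrt_lt_sqrt ha'.le hab
    have htba : r / Real.sqrt b < r / Real.sqrt a :=
      div_lt_div_of_pos_left hr (Real.sqrt_pos.2 ha') hsab
    exact hWanti htb hta htba
  exact ⟨hmono, fun σ₁ σ₂ h1 h2 heq => hmono.injOn h1 h2 heq⟩
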